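/- For all integers n ≥ 8, the tortoise complexity of the regular paperfolding word satisfies ρ^t_f(n) = 4n. -/

import Mathlib

/-- The tortoise operation on binary words: if the word contains a 1 (`true`),
delete the first occurrence of 1 and append a 1 at the right end; otherwise do nothing. -/
def tortoise (w : List Bool) : List Bool :=
  if true ∈ w then (w.erase true) ++ [true] else w

/-- `w` is a factor (subword) of the infinite word `x`. -/
def IsFactor (x : ℕ → Bool) (w : List Bool) : Prop :=
  ∃ i, w = (List.range w.length).map (fun t => x (i + t))

/-- The set of length-`n` factors of `x`. -/
def factorSet (x : ℕ → Bool) (n : ℕ) : Set (List Bool) :=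
  {w | w.length = n ∧ IsFactor x w}

/-- The factor complexity of `x`. -/
noncomputable def rho (x : ℕ → Bool) (n : ℕ) : ℕ :=
  (factorSet x n).ncard

/-- The tortoise complexity of `x`: the number of `∼ₜ`-equivalence classes of
length-`n` factors of `x`, i.e. the number of distinct images under `tortoise`. -/
noncomputable def rhoTort (x : ℕ → Bool) (n : ℕ) : ℕ :=
  (tortoise '' factorSet x n).ncard

/-- The `k`-tortoise complexity of `x`: the number of equivalence classes of
length-`n` factors of `x` under `tortoise^[k] w = tortoise^[k] v`. -/
noncomputable def rhoTortK (k : ℕ) (x : ℕ → Bool) (n : ℕ) : ℕ :=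
  ((tortoise^[k]) '' factorSet x n).ncard

/-- `y` is a left special factor of `x`: both `0y` and `1y` are factors of `x`. -/
def LeftSpecial (x : ℕ → Bool) (y : List Bool) : Prop :=
  IsFactor x (false :: y) ∧ IsFactor x (true :: y)

/-- The Thue–Morse sequence: `tm n` is the parity of the number of 1's in the
binary expansion of `n` (`true` = 1). -/
def tm (n : ℕ) : Bool :=
  decide ((Nat.digits 2 n).sum % 2 = 1)

/-- The regular paperfolding sequence, reindexed so that `pf m = f_{m+1}`:
writing `m + 1 = n' * 2^k` with `n'` odd, `pf m = true` iff `n' ≡ 3 (mod 4)`. -/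
def pf (m : ℕ) : Bool :=
  decide ((m + 1) / 2 ^ (padicValNat 2 (m + 1)) % 4 = 3)



lemma pf_even (t : ℕ) : pf (2 * t) = decide (t % 2 = 1) := by
  unfold pf
  have h : padicValNat 2 (2 * t + 1) = 0 := by
    apply padicValNat.eq_zero_of_not_dvd
    omega
  rw [h]
  simp only [pow_zero, Nat.div_one, decide_eq_decide]
  omega

lemma pf_odd (t : ℕ) : pf (2 * t + 1) = pf t := by
  unfold pf
  have h2 : (2 * t + 1 + 1) = 2 * (t + 1) := by ring
  rw [h2]
  have h : padicValNat 2 (2 * (t + 1)) = padicValNat 2 (t + 1) + 1 := by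
    rw [padicValNat.mul (by norm_num) (by omega), padicValNat.self (by norm_num)]
    omega
  rw [h, pow_succ]
  congr 2
  rw [mul_comm (2 ^ padicValNat 2 (t+1)) 2, ← Nat.div_div_eq_div_mul,
    Nat.mul_div_cancel_left _ (by norm_num)]

lemma pfE (i : ℕ) (h : i % 2 = 0) : pf i = decide (i % 4 = 2) := by
  obtain ⟨t, rfl⟩ : ∃ t, i = 2 * t := ⟨i / 2, by omega⟩
  rw [pf_even, decide_eq_decide]
  omega

lemma pfO (i : ℕ) (h : i % 2 = 1) : pf i = pf (i / 2) := by
  obtain ⟨t, rfl⟩ : ∃ t, i = 2 * t + 1 := ⟨i / 2, by omega⟩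
  rw [pf_odd]
  congr 1
  omega




def F (i n : ℕ) : List Bool := (List.range n).map (fun t => pf (i + t))

def S (r n : ℕ) : Set (List Bool) := {w | ∃ i, i % 2 = r ∧ w = F i n}

@[simp] lemma F_length (i n : ℕ) : (F i n).length = n := by simp [F]

lemma F_getElem (i n t : ℕ) (h : t < n) : (F i n)[t]'(by simpa) = pf (i + t) := by
  simp [F]

lemma F_getD (i n t : ℕ) (h : t < n) : (F i n).getD t false = pf (i + t) := by
  rw [List.getD_eq_getElem _ _ (by simpa), F_getElem _ _ _ h]

def E0 (b : Bool) (n : ℕ) (u : List Bool) : List Bool :=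
  (List.range n).map (fun t => if t % 2 = 0 then xor b (decide (t / 2 % 2 = 1)) else u.getD (t / 2) false)

def E1 (b : Bool) (n : ℕ) (u : List Bool) : List Bool :=
  (List.range n).map (fun t => if t % 2 = 0 then u.getD (t / 2) false else xor b (decide ((t + 1) / 2 % 2 = 1)))

@[simp] lemma E0_length (b n u) : (E0 b n u).length = n := by simp [E0]
@[simp] lemma E1_length (b n u) : (E1 b n u).length = n := by simp [E1]

lemma decide_parity_xor (a b : ℕ) :
    decide ((a + b) % 2 = 1) = xor (decide (a % 2 = 1)) (decide (b % 2 = 1)) := by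
  rcases Nat.mod_two_eq_zero_or_one a with h|h <;> rcases Nat.mod_two_eq_zero_or_one b with h'|h' <;>
    simp [Nat.add_mod, h, h']

lemma comp0 (j n : ℕ) : F (2 * j) n = E0 (decide (j % 2 = 1)) n (F j (n / 2)) := by
  apply List.ext_getElem (by simp)
  intro t h1 h2
  simp only [F_length] at h1
  rw [F_getElem _ _ _ h1]
  simp only [E0, List.getElem_map, List.getElem_range]
  by_cases ht : t % 2 = 0
  · rw [if_pos ht, pfE _ (by omega)]
    rw [show decide ((2 * j + t) % 4 = 2) = decide ((j + t / 2) % 2 = 1) from by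
      rw [decide_eq_decide]; omega, decide_parity_xor]
  · rw [if_neg ht, pfO _ (by omega), F_getD _ _ _ (by omega)]
    congr 1
    omega

lemma comp1 (j n : ℕ) : F (2 * j + 1) n = E1 (decide (j % 2 = 1)) n (F j ((n + 1) / 2)) := by
  apply List.ext_getElem (by simp)
  intro t h1 h2
  simp only [F_length] at h1
  rw [F_getElem _ _ _ h1]
  simp only [E1, List.getElem_map, List.getElem_range]
  by_cases ht : t % 2 = 0
  · rw [if_pos ht, pfO _ (by omega), F_getD _ _ _ (by omega)]
    congr 1
    omega
  · rw [if_neg ht, pfE _ (by omega)]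
    rw [show decide ((2 * j + 1 + t) % 4 = 2) = decide ((j + (t + 1) / 2) % 2 = 1) from by
      rw [decide_eq_decide]; omega, decide_parity_xor]

lemma S0_eq (n : ℕ) :
    S 0 n = E0 false n '' S 0 (n / 2) ∪ E0 true n '' S 1 (n / 2) := by
  ext w
  constructor
  · rintro ⟨i, hi, rfl⟩
    obtain ⟨j, rfl⟩ : ∃ j, i = 2 * j := ⟨i / 2, by omega⟩
    rcases Nat.mod_two_eq_zero_or_one j with hj | hj
    · left
      exact ⟨F j (n / 2), ⟨j, hj, rfl⟩, by rw [comp0, hj]; norm_num⟩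
    · right
      exact ⟨F j (n / 2), ⟨j, hj, rfl⟩, by rw [comp0, hj]; norm_num⟩
  · rintro (⟨u, ⟨j, hj, rfl⟩, rfl⟩ | ⟨u, ⟨j, hj, rfl⟩, rfl⟩)
    · exact ⟨2 * j, by omega, by rw [comp0, hj]; norm_num⟩
    · exact ⟨2 * j, by omega, by rw [comp0, hj]; norm_num⟩

lemma S1_eq (n : ℕ) :
    S 1 n = E1 false n '' S 0 ((n + 1) / 2) ∪ E1 true n '' S 1 ((n + 1) / 2) := by
  ext w
  constructor
  · rintro ⟨i, hi, rfl⟩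
    obtain ⟨j, rfl⟩ : ∃ j, i = 2 * j + 1 := ⟨i / 2, by omega⟩
    rcases Nat.mod_two_eq_zero_or_one j with hj | hj
    · left
      exact ⟨F j ((n + 1) / 2), ⟨j, hj, rfl⟩, by rw [comp1, hj]; norm_num⟩
    · right
      exact ⟨F j ((n + 1) / 2), ⟨j, hj, rfl⟩, by rw [comp1, hj]; norm_num⟩
  · rintro (⟨u, ⟨j, hj, rfl⟩, rfl⟩ | ⟨u, ⟨j, hj, rfl⟩, rfl⟩)
    · exact ⟨2 * j + 1, by omega, by rw [comp1, hj]; norm_num⟩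
    · exact ⟨2 * j + 1, by omega, by rw [comp1, hj]; norm_num⟩



-- Section 4
lemma S_finite (r n : ℕ) : (S r n).Finite := by
  apply (List.finite_length_eq Bool n).subset
  rintro w ⟨i, _, rfl⟩
  simp [F_length]

lemma S_length {r n : ℕ} {w : List Bool} (h : w ∈ S r n) : w.length = n := by
  obtain ⟨i, _, rfl⟩ := h; exact F_length i n

lemma E0_getD (b n : ℕ → ℕ) : True := trivial

lemma E0_getD' (b : Bool) (n : ℕ) (u : List Bool) (t : ℕ) (h : t < n) :
    (E0 b n u).getD t false =
      if t % 2 = 0 then xor b (decide (t / 2 % 2 = 1)) else u.getD (t / 2) false := by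
  rw [List.getD_eq_getElem _ _ (by simp [E0]; omega)]
  simp [E0]

lemma E1_getD' (b : Bool) (n : ℕ) (u : List Bool) (t : ℕ) (h : t < n) :
    (E1 b n u).getD t false =
      if t % 2 = 0 then u.getD (t / 2) false else xor b (decide ((t + 1) / 2 % 2 = 1)) := by
  rw [List.getD_eq_getElem _ _ (by simp [E1]; omega)]
  simp [E1]

lemma E0_injOn (b : Bool) (n r : ℕ) : Set.InjOn (E0 b n) (S r (n / 2)) := by
  intro u hu u' hu' heq
  have l1 := S_length hu
  have l2 := S_length hu'
  apply List.ext_getElem (by omega)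
  intro s hs _
  have hsn : 2 * s + 1 < n := by omega
  have := congrArg (fun l => l.getD (2 * s + 1) false) heq
  simp only [E0_getD' _ _ _ _ hsn] at this
  rw [if_neg (by omega), if_neg (by omega)] at this
  rw [show (2 * s + 1) / 2 = s by omega] at this
  rwa [List.getD_eq_getElem _ _ (by omega), List.getD_eq_getElem _ _ (by omega)] at this

lemma E1_injOn (b : Bool) (n r : ℕ) : Set.InjOn (E1 b n) (S r ((n + 1) / 2)) := by
  intro u hu u' hu' heq
  have l1 := S_length hu
  have l2 := S_length hu'
  apply List.ext_getElem (by omega)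
  intro s hs _
  have hsn : 2 * s < n := by omega
  have := congrArg (fun l => l.getD (2 * s) false) heq
  simp only [E1_getD' _ _ _ _ hsn] at this
  rw [if_pos (by omega), if_pos (by omega)] at this
  rw [show (2 * s) / 2 = s by omega] at this
  rwa [List.getD_eq_getElem _ _ (by omega), List.getD_eq_getElem _ _ (by omega)] at this

lemma E0_disj (n : ℕ) (hn : 1 ≤ n) (r r' : ℕ) :
    Disjoint (E0 false n '' S r (n / 2)) (E0 true n '' S r' (n / 2)) := by
  rw [Set.disjoint_left]
  rintro w ⟨u, _, rfl⟩ ⟨u', _, heq⟩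
  have := congrArg (fun l => l.getD 0 false) heq
  simp only [E0_getD' _ _ _ _ hn] at this
  norm_num at this

lemma E1_disj (n : ℕ) (hn : 2 ≤ n) (r r' : ℕ) :
    Disjoint (E1 false n '' S r ((n + 1) / 2)) (E1 true n '' S r' ((n + 1) / 2)) := by
  rw [Set.disjoint_left]
  rintro w ⟨u, _, rfl⟩ ⟨u', _, heq⟩
  have := congrArg (fun l => l.getD 1 false) heq
  simp only [E1_getD' _ _ _ _ hn] at this
  norm_num at this

lemma s0_rec (n : ℕ) (hn : 2 ≤ n) :
    (S 0 n).ncard = (S 0 (n / 2)).ncard + (S 1 (n / 2)).ncard := by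
  rw [S0_eq, Set.ncard_union_eq (E0_disj n (by omega) 0 1)
    ((S_finite _ _).image _) ((S_finite _ _).image _),
    Set.ncard_image_of_injOn (E0_injOn _ _ _), Set.ncard_image_of_injOn (E0_injOn _ _ _)]

lemma s1_rec (n : ℕ) (hn : 2 ≤ n) :
    (S 1 n).ncard = (S 0 ((n + 1) / 2)).ncard + (S 1 ((n + 1) / 2)).ncard := by
  rw [S1_eq, Set.ncard_union_eq (E1_disj n hn 0 1)
    ((S_finite _ _).image _) ((S_finite _ _).image _),
    Set.ncard_image_of_injOn (E1_injOn _ _ _), Set.ncard_image_of_injOn (E1_injOn _ _ _)]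

lemma F_one (i : ℕ) : F i 1 = [pf i] := by
  show List.map _ (List.range 1) = _
  rw [show List.range 1 = [0] from rfl]
  simp

lemma S_one (r : ℕ) (hr : r < 2) : S r 1 = {[false], [true]} := by
  ext w
  constructor
  · rintro ⟨i, hi, rfl⟩
    rw [F_one]
    cases pf i <;> simp
  · intro hw
    rcases hw with h | h
    · interval_cases r
      · exact ⟨0, rfl, by rw [F_one, pfE 0 rfl, h]; norm_num⟩
      · exact ⟨1, rfl, by rw [F_one, pfO 1 rfl, pfE 0 rfl, h]; norm_num⟩
    · simp only [Set.mem_singleton_iff] at h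
      interval_cases r
      · exact ⟨2, rfl, by rw [F_one, pfE 2 rfl, h]; norm_num⟩
      · exact ⟨5, rfl, by rw [F_one, pfO 5 rfl, pfE 2 rfl, h]; norm_num⟩

lemma s_one (r : ℕ) (hr : r < 2) : (S r 1).ncard = 2 := by
  rw [S_one r hr]
  exact Set.ncard_pair (by simp)

lemma g_eq : ∀ n, 1 ≤ n → (S 0 n).ncard + (S 1 n).ncard = 4 * n := by
  intro n
  induction n using Nat.strong_induction_on with
  | _ n ih =>
    intro hn
    rcases eq_or_lt_of_le hn with h | h
    · rw [← h, s_one 0 (by norm_num), s_one 1 (by norm_num)]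
    · have h2 : 2 ≤ n := h
      have e0 := ih (n / 2) (by omega) (by omega)
      have e1 := ih ((n + 1) / 2) (by omega) (by omega)
      rw [s0_rec n h2, s1_rec n h2]
      omega

def L0_1 : List (List Bool) :=
[[false],
 [true]]

def L1_1 : List (List Bool) :=
[[false],
 [true]]

def L0_2 : List (List Bool) :=
[[false,false],
 [false,true],
 [true,false],
 [true,true]]

def L1_2 : List (List Bool) :=
[[false,true],
 [true,true],
 [false,false],
 [true,false]]

def L0_3 : List (List Bool) :=
[[false,false,true],
 [false,true,true],
 [true,false,false],
 [true,true,false]]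

def L1_3 : List (List Bool) :=
[[false,true,false],
 [false,true,true],
 [true,true,false],
 [true,true,true],
 [false,false,true],
 [true,false,true],
 [false,false,false],
 [true,false,false]]

def L0_4 : List (List Bool) :=
[[false,false,true,false],
 [false,false,true,true],
 [false,true,true,false],
 [false,true,true,true],
 [true,false,false,true],
 [true,true,false,true],
 [true,false,false,false],
 [true,true,false,false]]

def L1_4 : List (List Bool) :=
[[false,true,false,false],
 [false,true,true,false],
 [true,true,false,false],
 [true,true,true,false],
 [false,false,true,true],
 [true,false,true,true],
 [false,false,false,true],
 [true,false,false,true]]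

def L0_5 : List (List Bool) :=
[[false,false,true,false,false],
 [false,false,true,true,false],
 [false,true,true,false,false],
 [false,true,true,true,false],
 [true,false,false,true,true],
 [true,true,false,true,true],
 [true,false,false,false,true],
 [true,true,false,false,true]]

def L1_5 : List (List Bool) :=
[[false,true,false,false,true],
 [false,true,true,false,true],
 [true,true,false,false,false],
 [true,true,true,false,false],
 [false,false,true,true,false],
 [false,false,true,true,true],
 [true,false,true,true,false],
 [true,false,true,true,true],
 [false,false,false,true,true],
 [true,false,false,true,true],
 [false,false,false,true,false],
 [true,false,false,true,false]]

def L0_6 : List (List Bool) :=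
[[false,false,true,false,false,true],
 [false,false,true,true,false,true],
 [false,true,true,false,false,false],
 [false,true,true,true,false,false],
 [true,false,false,true,true,false],
 [true,false,false,true,true,true],
 [true,true,false,true,true,false],
 [true,true,false,true,true,true],
 [true,false,false,false,true,true],
 [true,true,false,false,true,true],
 [true,false,false,false,true,false],
 [true,true,false,false,true,false]]

def L1_6 : List (List Bool) :=
[[false,true,false,false,true,true],
 [false,true,true,false,true,true],
 [true,true,false,false,false,true],
 [true,true,true,false,false,true],
 [false,false,true,true,false,false],
 [false,false,true,true,true,false],
 [true,false,true,true,false,false],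
 [true,false,true,true,true,false],
 [false,false,false,true,true,false],
 [true,false,false,true,true,false],
 [false,false,false,true,false,false],
 [true,false,false,true,false,false]]

def L0_7 : List (List Bool) :=
[[false,false,true,false,false,true,true],
 [false,false,true,true,false,true,true],
 [false,true,true,false,false,false,true],
 [false,true,true,true,false,false,true],
 [true,false,false,true,true,false,false],
 [true,false,false,true,true,true,false],
 [true,true,false,true,true,false,false],
 [true,true,false,true,true,true,false],
 [true,false,false,false,true,true,false],
 [true,true,false,false,true,true,false],
 [true,false,false,false,true,false,false],
 [true,true,false,false,true,false,false]]

def L1_7 : List (List Bool) :=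
[[false,true,false,false,true,true,false],
 [false,true,false,false,true,true,true],
 [false,true,true,false,true,true,false],
 [false,true,true,false,true,true,true],
 [true,true,false,false,false,true,true],
 [true,true,true,false,false,true,true],
 [true,true,false,false,false,true,false],
 [true,true,true,false,false,true,false],
 [false,false,true,true,false,false,false],
 [false,false,true,true,true,false,false],
 [true,false,true,true,false,false,false],
 [true,false,true,true,true,false,false],
 [false,false,false,true,true,false,true],
 [true,false,false,true,true,false,true],
 [false,false,false,true,false,false,true],
 [true,false,false,true,false,false,true]]

def L0_8 : List (List Bool) :=
[[false,false,true,false,false,true,true,false],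
 [false,false,true,false,false,true,true,true],
 [false,false,true,true,false,true,true,false],
 [false,false,true,true,false,true,true,true],
 [false,true,true,false,false,false,true,true],
 [false,true,true,true,false,false,true,true],
 [false,true,true,false,false,false,true,false],
 [false,true,true,true,false,false,true,false],
 [true,false,false,true,true,false,false,false],
 [true,false,false,true,true,true,false,false],
 [true,true,false,true,true,false,false,false],
 [true,true,false,true,true,true,false,false],
 [true,false,false,false,true,true,false,true],
 [true,true,false,false,true,true,false,true],
 [true,false,false,false,true,false,false,true],
 [true,true,false,false,true,false,false,true]]

def L1_8 : List (List Bool) :=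
[[false,true,false,false,true,true,false,false],
 [false,true,false,false,true,true,true,false],
 [false,true,true,false,true,true,false,false],
 [false,true,true,false,true,true,true,false],
 [true,true,false,false,false,true,true,false],
 [true,true,true,false,false,true,true,false],
 [true,true,false,false,false,true,false,false],
 [true,true,true,false,false,true,false,false],
 [false,false,true,true,false,false,false,true],
 [false,false,true,true,true,false,false,true],
 [true,false,true,true,false,false,false,true],
 [true,false,true,true,true,false,false,true],
 [false,false,false,true,true,false,true,true],
 [true,false,false,true,true,false,true,true],
 [false,false,false,true,false,false,true,true],
 [true,false,false,true,false,false,true,true]]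

def L0_9 : List (List Bool) :=
[[false,false,true,false,false,true,true,false,false],
 [false,false,true,false,false,true,true,true,false],
 [false,false,true,true,false,true,true,false,false],
 [false,false,true,true,false,true,true,true,false],
 [false,true,true,false,false,false,true,true,false],
 [false,true,true,true,false,false,true,true,false],
 [false,true,true,false,false,false,true,false,false],
 [false,true,true,true,false,false,true,false,false],
 [true,false,false,true,true,false,false,false,true],
 [true,false,false,true,true,true,false,false,true],
 [true,true,false,true,true,false,false,false,true],
 [true,true,false,true,true,true,false,false,true],
 [true,false,false,false,true,true,false,true,true],
 [true,true,false,false,true,true,false,true,true],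
 [true,false,false,false,true,false,false,true,true],
 [true,true,false,false,true,false,false,true,true]]

def L1_9 : List (List Bool) :=
[[false,true,false,false,true,true,false,false,false],
 [false,true,false,false,true,true,true,false,false],
 [false,true,true,false,true,true,false,false,false],
 [false,true,true,false,true,true,true,false,false],
 [true,true,false,false,false,true,true,false,true],
 [true,true,true,false,false,true,true,false,true],
 [true,true,false,false,false,true,false,false,true],
 [true,true,true,false,false,true,false,false,true],
 [false,false,true,true,false,false,false,true,true],
 [false,false,true,true,true,false,false,true,true],
 [true,false,true,true,false,false,false,true,false],
 [true,false,true,true,true,false,false,true,false],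
 [false,false,false,true,true,false,true,true,false],
 [false,false,false,true,true,false,true,true,true],
 [true,false,false,true,true,false,true,true,false],
 [true,false,false,true,true,false,true,true,true],
 [false,false,false,true,false,false,true,true,true],
 [true,false,false,true,false,false,true,true,true],
 [false,false,false,true,false,false,true,true,false],
 [true,false,false,true,false,false,true,true,false]]

def L0_10 : List (List Bool) :=
[[false,false,true,false,false,true,true,false,false,false],
 [false,false,true,false,false,true,true,true,false,false],
 [false,false,true,true,false,true,true,false,false,false],
 [false,false,true,true,false,true,true,true,false,false],
 [false,true,true,false,false,false,true,true,false,true],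
 [false,true,true,true,false,false,true,true,false,true],
 [false,true,true,false,false,false,true,false,false,true],
 [false,true,true,true,false,false,true,false,false,true],
 [true,false,false,true,true,false,false,false,true,true],
 [true,false,false,true,true,true,false,false,true,true],
 [true,true,false,true,true,false,false,false,true,false],
 [true,true,false,true,true,true,false,false,true,false],
 [true,false,false,false,true,true,false,true,true,false],
 [true,false,false,false,true,true,false,true,true,true],
 [true,true,false,false,true,true,false,true,true,false],
 [true,true,false,false,true,true,false,true,true,true],
 [true,false,false,false,true,false,false,true,true,true],
 [true,true,false,false,true,false,false,true,true,true],
 [true,false,false,false,true,false,false,true,true,false],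
 [true,true,false,false,true,false,false,true,true,false]]

def L1_10 : List (List Bool) :=
[[false,true,false,false,true,true,false,false,false,true],
 [false,true,false,false,true,true,true,false,false,true],
 [false,true,true,false,true,true,false,false,false,true],
 [false,true,true,false,true,true,true,false,false,true],
 [true,true,false,false,false,true,true,false,true,true],
 [true,true,true,false,false,true,true,false,true,true],
 [true,true,false,false,false,true,false,false,true,true],
 [true,true,true,false,false,true,false,false,true,true],
 [false,false,true,true,false,false,false,true,true,false],
 [false,false,true,true,true,false,false,true,true,false],
 [true,false,true,true,false,false,false,true,false,false],
 [true,false,true,true,true,false,false,true,false,false],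
 [false,false,false,true,true,false,true,true,false,false],
 [false,false,false,true,true,false,true,true,true,false],
 [true,false,false,true,true,false,true,true,false,false],
 [true,false,false,true,true,false,true,true,true,false],
 [false,false,false,true,false,false,true,true,true,false],
 [true,false,false,true,false,false,true,true,true,false],
 [false,false,false,true,false,false,true,true,false,false],
 [true,false,false,true,false,false,true,true,false,false]]

def L0_11 : List (List Bool) :=
[[false,false,true,false,false,true,true,false,false,false,true],
 [false,false,true,false,false,true,true,true,false,false,true],
 [false,false,true,true,false,true,true,false,false,false,true],
 [false,false,true,true,false,true,true,true,false,false,true],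
 [false,true,true,false,false,false,true,true,false,true,true],
 [false,true,true,true,false,false,true,true,false,true,true],
 [false,true,true,false,false,false,true,false,false,true,true],
 [false,true,true,true,false,false,true,false,false,true,true],
 [true,false,false,true,true,false,false,false,true,true,false],
 [true,false,false,true,true,true,false,false,true,true,false],
 [true,true,false,true,true,false,false,false,true,false,false],
 [true,true,false,true,true,true,false,false,true,false,false],
 [true,false,false,false,true,true,false,true,true,false,false],
 [true,false,false,false,true,true,false,true,true,true,false],
 [true,true,false,false,true,true,false,true,true,false,false],
 [true,true,false,false,true,true,false,true,true,true,false],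
 [true,false,false,false,true,false,false,true,true,true,false],
 [true,true,false,false,true,false,false,true,true,true,false],
 [true,false,false,false,true,false,false,true,true,false,false],
 [true,true,false,false,true,false,false,true,true,false,false]]

def L1_11 : List (List Bool) :=
[[false,true,false,false,true,true,false,false,false,true,true],
 [false,true,false,false,true,true,true,false,false,true,true],
 [false,true,true,false,true,true,false,false,false,true,false],
 [false,true,true,false,true,true,true,false,false,true,false],
 [true,true,false,false,false,true,true,false,true,true,false],
 [true,true,false,false,false,true,true,false,true,true,true],
 [true,true,true,false,false,true,true,false,true,true,false],
 [true,true,true,false,false,true,true,false,true,true,true],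
 [true,true,false,false,false,true,false,false,true,true,true],
 [true,true,true,false,false,true,false,false,true,true,true],
 [true,true,false,false,false,true,false,false,true,true,false],
 [true,true,true,false,false,true,false,false,true,true,false],
 [false,false,true,true,false,false,false,true,true,false,true],
 [false,false,true,true,true,false,false,true,true,false,true],
 [true,false,true,true,false,false,false,true,false,false,true],
 [true,false,true,true,true,false,false,true,false,false,true],
 [false,false,false,true,true,false,true,true,false,false,false],
 [false,false,false,true,true,false,true,true,true,false,false],
 [true,false,false,true,true,false,true,true,false,false,false],
 [true,false,false,true,true,false,true,true,true,false,false],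
 [false,false,false,true,false,false,true,true,true,false,false],
 [true,false,false,true,false,false,true,true,true,false,false],
 [false,false,false,true,false,false,true,true,false,false,false],
 [true,false,false,true,false,false,true,true,false,false,false]]

def L0_12 : List (List Bool) :=
[[false,false,true,false,false,true,true,false,false,false,true,true],
 [false,false,true,false,false,true,true,true,false,false,true,true],
 [false,false,true,true,false,true,true,false,false,false,true,false],
 [false,false,true,true,false,true,true,true,false,false,true,false],
 [false,true,true,false,false,false,true,true,false,true,true,false],
 [false,true,true,false,false,false,true,true,false,true,true,true],
 [false,true,true,true,false,false,true,true,false,true,true,false],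
 [false,true,true,true,false,false,true,true,false,true,true,true],
 [false,true,true,false,false,false,true,false,false,true,true,true],
 [false,true,true,true,false,false,true,false,false,true,true,true],
 [false,true,true,false,false,false,true,false,false,true,true,false],
 [false,true,true,true,false,false,true,false,false,true,true,false],
 [true,false,false,true,true,false,false,false,true,true,false,true],
 [true,false,false,true,true,true,false,false,true,true,false,true],
 [true,true,false,true,true,false,false,false,true,false,false,true],
 [true,true,false,true,true,true,false,false,true,false,false,true],
 [true,false,false,false,true,true,false,true,true,false,false,false],
 [true,false,false,false,true,true,false,true,true,true,false,false],
 [true,true,false,false,true,true,false,true,true,false,false,false],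
 [true,true,false,false,true,true,false,true,true,true,false,false],
 [true,false,false,false,true,false,false,true,true,true,false,false],
 [true,true,false,false,true,false,false,true,true,true,false,false],
 [true,false,false,false,true,false,false,true,true,false,false,false],
 [true,true,false,false,true,false,false,true,true,false,false,false]]

def L1_12 : List (List Bool) :=
[[false,true,false,false,true,true,false,false,false,true,true,false],
 [false,true,false,false,true,true,true,false,false,true,true,false],
 [false,true,true,false,true,true,false,false,false,true,false,false],
 [false,true,true,false,true,true,true,false,false,true,false,false],
 [true,true,false,false,false,true,true,false,true,true,false,false],
 [true,true,false,false,false,true,true,false,true,true,true,false],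
 [true,true,true,false,false,true,true,false,true,true,false,false],
 [true,true,true,false,false,true,true,false,true,true,true,false],
 [true,true,false,false,false,true,false,false,true,true,true,false],
 [true,true,true,false,false,true,false,false,true,true,true,false],
 [true,true,false,false,false,true,false,false,true,true,false,false],
 [true,true,true,false,false,true,false,false,true,true,false,false],
 [false,false,true,true,false,false,false,true,true,false,true,true],
 [false,false,true,true,true,false,false,true,true,false,true,true],
 [true,false,true,true,false,false,false,true,false,false,true,true],
 [true,false,true,true,true,false,false,true,false,false,true,true],
 [false,false,false,true,true,false,true,true,false,false,false,true],
 [false,false,false,true,true,false,true,true,true,false,false,true],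
 [true,false,false,true,true,false,true,true,false,false,false,true],
 [true,false,false,true,true,false,true,true,true,false,false,true],
 [false,false,false,true,false,false,true,true,true,false,false,true],
 [true,false,false,true,false,false,true,true,true,false,false,true],
 [false,false,false,true,false,false,true,true,false,false,false,true],
 [true,false,false,true,false,false,true,true,false,false,false,true]]

def L0_13 : List (List Bool) :=
[[false,false,true,false,false,true,true,false,false,false,true,true,false],
 [false,false,true,false,false,true,true,true,false,false,true,true,false],
 [false,false,true,true,false,true,true,false,false,false,true,false,false],
 [false,false,true,true,false,true,true,true,false,false,true,false,false],
 [false,true,true,false,false,false,true,true,false,true,true,false,false],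
 [false,true,true,false,false,false,true,true,false,true,true,true,false],
 [false,true,true,true,false,false,true,true,false,true,true,false,false],
 [false,true,true,true,false,false,true,true,false,true,true,true,false],
 [false,true,true,false,false,false,true,false,false,true,true,true,false],
 [false,true,true,true,false,false,true,false,false,true,true,true,false],
 [false,true,true,false,false,false,true,false,false,true,true,false,false],
 [false,true,true,true,false,false,true,false,false,true,true,false,false],
 [true,false,false,true,true,false,false,false,true,true,false,true,true],
 [true,false,false,true,true,true,false,false,true,true,false,true,true],
 [true,true,false,true,true,false,false,false,true,false,false,true,true],
 [true,true,false,true,true,true,false,false,true,false,false,true,true],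
 [true,false,false,false,true,true,false,true,true,false,false,false,true],
 [true,false,false,false,true,true,false,true,true,true,false,false,true],
 [true,true,false,false,true,true,false,true,true,false,false,false,true],
 [true,true,false,false,true,true,false,true,true,true,false,false,true],
 [true,false,false,false,true,false,false,true,true,true,false,false,true],
 [true,true,false,false,true,false,false,true,true,true,false,false,true],
 [true,false,false,false,true,false,false,true,true,false,false,false,true],
 [true,true,false,false,true,false,false,true,true,false,false,false,true]]

def L1_13 : List (List Bool) :=
[[false,true,false,false,true,true,false,false,false,true,true,false,true],
 [false,true,false,false,true,true,true,false,false,true,true,false,true],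
 [false,true,true,false,true,true,false,false,false,true,false,false,true],
 [false,true,true,false,true,true,true,false,false,true,false,false,true],
 [true,true,false,false,false,true,true,false,true,true,false,false,false],
 [true,true,false,false,false,true,true,false,true,true,true,false,false],
 [true,true,true,false,false,true,true,false,true,true,false,false,false],
 [true,true,true,false,false,true,true,false,true,true,true,false,false],
 [true,true,false,false,false,true,false,false,true,true,true,false,false],
 [true,true,true,false,false,true,false,false,true,true,true,false,false],
 [true,true,false,false,false,true,false,false,true,true,false,false,false],
 [true,true,true,false,false,true,false,false,true,true,false,false,false],
 [false,false,true,true,false,false,false,true,true,false,true,true,false],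
 [false,false,true,true,false,false,false,true,true,false,true,true,true],
 [false,false,true,true,true,false,false,true,true,false,true,true,false],
 [false,false,true,true,true,false,false,true,true,false,true,true,true],
 [true,false,true,true,false,false,false,true,false,false,true,true,true],
 [true,false,true,true,true,false,false,true,false,false,true,true,true],
 [true,false,true,true,false,false,false,true,false,false,true,true,false],
 [true,false,true,true,true,false,false,true,false,false,true,true,false],
 [false,false,false,true,true,false,true,true,false,false,false,true,false],
 [false,false,false,true,true,false,true,true,true,false,false,true,false],
 [true,false,false,true,true,false,true,true,false,false,false,true,false],
 [true,false,false,true,true,false,true,true,true,false,false,true,false],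
 [false,false,false,true,false,false,true,true,true,false,false,true,true],
 [true,false,false,true,false,false,true,true,true,false,false,true,true],
 [false,false,false,true,false,false,true,true,false,false,false,true,true],
 [true,false,false,true,false,false,true,true,false,false,false,true,true]]

def L0_14 : List (List Bool) :=
[[false,false,true,false,false,true,true,false,false,false,true,true,false,true],
 [false,false,true,false,false,true,true,true,false,false,true,true,false,true],
 [false,false,true,true,false,true,true,false,false,false,true,false,false,true],
 [false,false,true,true,false,true,true,true,false,false,true,false,false,true],
 [false,true,true,false,false,false,true,true,false,true,true,false,false,false],
 [false,true,true,false,false,false,true,true,false,true,true,true,false,false],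
 [false,true,true,true,false,false,true,true,false,true,true,false,false,false],
 [false,true,true,true,false,false,true,true,false,true,true,true,false,false],
 [false,true,true,false,false,false,true,false,false,true,true,true,false,false],
 [false,true,true,true,false,false,true,false,false,true,true,true,false,false],
 [false,true,true,false,false,false,true,false,false,true,true,false,false,false],
 [false,true,true,true,false,false,true,false,false,true,true,false,false,false],
 [true,false,false,true,true,false,false,false,true,true,false,true,true,false],
 [true,false,false,true,true,false,false,false,true,true,false,true,true,true],
 [true,false,false,true,true,true,false,false,true,true,false,true,true,false],
 [true,false,false,true,true,true,false,false,true,true,false,true,true,true],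
 [true,true,false,true,true,false,false,false,true,false,false,true,true,true],
 [true,true,false,true,true,true,false,false,true,false,false,true,true,true],
 [true,true,false,true,true,false,false,false,true,false,false,true,true,false],
 [true,true,false,true,true,true,false,false,true,false,false,true,true,false],
 [true,false,false,false,true,true,false,true,true,false,false,false,true,false],
 [true,false,false,false,true,true,false,true,true,true,false,false,true,false],
 [true,true,false,false,true,true,false,true,true,false,false,false,true,false],
 [true,true,false,false,true,true,false,true,true,true,false,false,true,false],
 [true,false,false,false,true,false,false,true,true,true,false,false,true,true],
 [true,true,false,false,true,false,false,true,true,true,false,false,true,true],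
 [true,false,false,false,true,false,false,true,true,false,false,false,true,true],
 [true,true,false,false,true,false,false,true,true,false,false,false,true,true]]

def L1_14 : List (List Bool) :=
[[false,true,false,false,true,true,false,false,false,true,true,false,true,true],
 [false,true,false,false,true,true,true,false,false,true,true,false,true,true],
 [false,true,true,false,true,true,false,false,false,true,false,false,true,true],
 [false,true,true,false,true,true,true,false,false,true,false,false,true,true],
 [true,true,false,false,false,true,true,false,true,true,false,false,false,true],
 [true,true,false,false,false,true,true,false,true,true,true,false,false,true],
 [true,true,true,false,false,true,true,false,true,true,false,false,false,true],
 [true,true,true,false,false,true,true,false,true,true,true,false,false,true],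
 [true,true,false,false,false,true,false,false,true,true,true,false,false,true],
 [true,true,true,false,false,true,false,false,true,true,true,false,false,true],
 [true,true,false,false,false,true,false,false,true,true,false,false,false,true],
 [true,true,true,false,false,true,false,false,true,true,false,false,false,true],
 [false,false,true,true,false,false,false,true,true,false,true,true,false,false],
 [false,false,true,true,false,false,false,true,true,false,true,true,true,false],
 [false,false,true,true,true,false,false,true,true,false,true,true,false,false],
 [false,false,true,true,true,false,false,true,true,false,true,true,true,false],
 [true,false,true,true,false,false,false,true,false,false,true,true,true,false],
 [true,false,true,true,true,false,false,true,false,false,true,true,true,false],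
 [true,false,true,true,false,false,false,true,false,false,true,true,false,false],
 [true,false,true,true,true,false,false,true,false,false,true,true,false,false],
 [false,false,false,true,true,false,true,true,false,false,false,true,false,false],
 [false,false,false,true,true,false,true,true,true,false,false,true,false,false],
 [true,false,false,true,true,false,true,true,false,false,false,true,false,false],
 [true,false,false,true,true,false,true,true,true,false,false,true,false,false],
 [false,false,false,true,false,false,true,true,true,false,false,true,true,false],
 [true,false,false,true,false,false,true,true,true,false,false,true,true,false],
 [false,false,false,true,false,false,true,true,false,false,false,true,true,false],
 [true,false,false,true,false,false,true,true,false,false,false,true,true,false]]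


lemma image_memlist (f : List Bool → List Bool) (l : List (List Bool)) :
    f '' {w | w ∈ l} = {w | w ∈ l.map f} := by
  ext y; simp [List.mem_map]

lemma union_memlist (l1 l2 : List (List Bool)) :
    {w | w ∈ l1} ∪ {w | w ∈ l2} = {w | w ∈ l1 ++ l2} := by
  ext y; simp [List.mem_append]

lemma chainL0_1 : S 0 1 = {w | w ∈ L0_1} := by
  rw [S_one 0 (by norm_num)]; ext w; simp [L0_1]

lemma chainL1_1 : S 1 1 = {w | w ∈ L1_1} := by
  rw [S_one 1 (by norm_num)]; ext w; simp [L1_1]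


lemma chainL0_2 : S 0 2 = {w | w ∈ L0_2} := by
  rw [S0_eq, show (2:ℕ)/2 = 1 from rfl, chainL0_1, chainL1_1, image_memlist, image_memlist, union_memlist]
  have h : (L0_1.map (E0 false 2)) ++ (L1_1.map (E0 true 2)) = L0_2 := by decide
  rw [h]


lemma chainL1_2 : S 1 2 = {w | w ∈ L1_2} := by
  rw [S1_eq, show (2+1:ℕ)/2 = 1 from rfl, chainL0_1, chainL1_1, image_memlist, image_memlist, union_memlist]
  have h : (L0_1.map (E1 false 2)) ++ (L1_1.map (E1 true 2)) = L1_2 := by decide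
  rw [h]


lemma chainL0_3 : S 0 3 = {w | w ∈ L0_3} := by
  rw [S0_eq, show (3:ℕ)/2 = 1 from rfl, chainL0_1, chainL1_1, image_memlist, image_memlist, union_memlist]
  have h : (L0_1.map (E0 false 3)) ++ (L1_1.map (E0 true 3)) = L0_3 := by decide
  rw [h]


lemma chainL1_3 : S 1 3 = {w | w ∈ L1_3} := by
  rw [S1_eq, show (3+1:ℕ)/2 = 2 from rfl, chainL0_2, chainL1_2, image_memlist, image_memlist, union_memlist]
  have h : (L0_2.map (E1 false 3)) ++ (L1_2.map (E1 true 3)) = L1_3 := by decide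
  rw [h]


lemma chainL0_4 : S 0 4 = {w | w ∈ L0_4} := by
  rw [S0_eq, show (4:ℕ)/2 = 2 from rfl, chainL0_2, chainL1_2, image_memlist, image_memlist, union_memlist]
  have h : (L0_2.map (E0 false 4)) ++ (L1_2.map (E0 true 4)) = L0_4 := by decide
  rw [h]


lemma chainL1_4 : S 1 4 = {w | w ∈ L1_4} := by
  rw [S1_eq, show (4+1:ℕ)/2 = 2 from rfl, chainL0_2, chainL1_2, image_memlist, image_memlist, union_memlist]
  have h : (L0_2.map (E1 false 4)) ++ (L1_2.map (E1 true 4)) = L1_4 := by decide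
  rw [h]


lemma chainL0_5 : S 0 5 = {w | w ∈ L0_5} := by
  rw [S0_eq, show (5:ℕ)/2 = 2 from rfl, chainL0_2, chainL1_2, image_memlist, image_memlist, union_memlist]
  have h : (L0_2.map (E0 false 5)) ++ (L1_2.map (E0 true 5)) = L0_5 := by decide
  rw [h]


lemma chainL1_5 : S 1 5 = {w | w ∈ L1_5} := by
  rw [S1_eq, show (5+1:ℕ)/2 = 3 from rfl, chainL0_3, chainL1_3, image_memlist, image_memlist, union_memlist]
  have h : (L0_3.map (E1 false 5)) ++ (L1_3.map (E1 true 5)) = L1_5 := by decide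
  rw [h]


lemma chainL0_6 : S 0 6 = {w | w ∈ L0_6} := by
  rw [S0_eq, show (6:ℕ)/2 = 3 from rfl, chainL0_3, chainL1_3, image_memlist, image_memlist, union_memlist]
  have h : (L0_3.map (E0 false 6)) ++ (L1_3.map (E0 true 6)) = L0_6 := by decide
  rw [h]


lemma chainL1_6 : S 1 6 = {w | w ∈ L1_6} := by
  rw [S1_eq, show (6+1:ℕ)/2 = 3 from rfl, chainL0_3, chainL1_3, image_memlist, image_memlist, union_memlist]
  have h : (L0_3.map (E1 false 6)) ++ (L1_3.map (E1 true 6)) = L1_6 := by decide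
  rw [h]


lemma chainL0_7 : S 0 7 = {w | w ∈ L0_7} := by
  rw [S0_eq, show (7:ℕ)/2 = 3 from rfl, chainL0_3, chainL1_3, image_memlist, image_memlist, union_memlist]
  have h : (L0_3.map (E0 false 7)) ++ (L1_3.map (E0 true 7)) = L0_7 := by decide
  rw [h]


lemma chainL1_7 : S 1 7 = {w | w ∈ L1_7} := by
  rw [S1_eq, show (7+1:ℕ)/2 = 4 from rfl, chainL0_4, chainL1_4, image_memlist, image_memlist, union_memlist]
  have h : (L0_4.map (E1 false 7)) ++ (L1_4.map (E1 true 7)) = L1_7 := by decide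
  rw [h]


lemma chainL0_8 : S 0 8 = {w | w ∈ L0_8} := by
  rw [S0_eq, show (8:ℕ)/2 = 4 from rfl, chainL0_4, chainL1_4, image_memlist, image_memlist, union_memlist]
  have h : (L0_4.map (E0 false 8)) ++ (L1_4.map (E0 true 8)) = L0_8 := by decide
  rw [h]


lemma chainL1_8 : S 1 8 = {w | w ∈ L1_8} := by
  rw [S1_eq, show (8+1:ℕ)/2 = 4 from rfl, chainL0_4, chainL1_4, image_memlist, image_memlist, union_memlist]
  have h : (L0_4.map (E1 false 8)) ++ (L1_4.map (E1 true 8)) = L1_8 := by decide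
  rw [h]


lemma chainL0_9 : S 0 9 = {w | w ∈ L0_9} := by
  rw [S0_eq, show (9:ℕ)/2 = 4 from rfl, chainL0_4, chainL1_4, image_memlist, image_memlist, union_memlist]
  have h : (L0_4.map (E0 false 9)) ++ (L1_4.map (E0 true 9)) = L0_9 := by decide
  rw [h]


lemma chainL1_9 : S 1 9 = {w | w ∈ L1_9} := by
  rw [S1_eq, show (9+1:ℕ)/2 = 5 from rfl, chainL0_5, chainL1_5, image_memlist, image_memlist, union_memlist]
  have h : (L0_5.map (E1 false 9)) ++ (L1_5.map (E1 true 9)) = L1_9 := by decide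
  rw [h]


lemma chainL0_10 : S 0 10 = {w | w ∈ L0_10} := by
  rw [S0_eq, show (10:ℕ)/2 = 5 from rfl, chainL0_5, chainL1_5, image_memlist, image_memlist, union_memlist]
  have h : (L0_5.map (E0 false 10)) ++ (L1_5.map (E0 true 10)) = L0_10 := by decide
  rw [h]


lemma chainL1_10 : S 1 10 = {w | w ∈ L1_10} := by
  rw [S1_eq, show (10+1:ℕ)/2 = 5 from rfl, chainL0_5, chainL1_5, image_memlist, image_memlist, union_memlist]
  have h : (L0_5.map (E1 false 10)) ++ (L1_5.map (E1 true 10)) = L1_10 := by decide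
  rw [h]


lemma chainL0_11 : S 0 11 = {w | w ∈ L0_11} := by
  rw [S0_eq, show (11:ℕ)/2 = 5 from rfl, chainL0_5, chainL1_5, image_memlist, image_memlist, union_memlist]
  have h : (L0_5.map (E0 false 11)) ++ (L1_5.map (E0 true 11)) = L0_11 := by decide
  rw [h]


lemma chainL1_11 : S 1 11 = {w | w ∈ L1_11} := by
  rw [S1_eq, show (11+1:ℕ)/2 = 6 from rfl, chainL0_6, chainL1_6, image_memlist, image_memlist, union_memlist]
  have h : (L0_6.map (E1 false 11)) ++ (L1_6.map (E1 true 11)) = L1_11 := by decide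
  rw [h]


lemma chainL0_12 : S 0 12 = {w | w ∈ L0_12} := by
  rw [S0_eq, show (12:ℕ)/2 = 6 from rfl, chainL0_6, chainL1_6, image_memlist, image_memlist, union_memlist]
  have h : (L0_6.map (E0 false 12)) ++ (L1_6.map (E0 true 12)) = L0_12 := by decide
  rw [h]


lemma chainL1_12 : S 1 12 = {w | w ∈ L1_12} := by
  rw [S1_eq, show (12+1:ℕ)/2 = 6 from rfl, chainL0_6, chainL1_6, image_memlist, image_memlist, union_memlist]
  have h : (L0_6.map (E1 false 12)) ++ (L1_6.map (E1 true 12)) = L1_12 := by decide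
  rw [h]


lemma chainL0_13 : S 0 13 = {w | w ∈ L0_13} := by
  rw [S0_eq, show (13:ℕ)/2 = 6 from rfl, chainL0_6, chainL1_6, image_memlist, image_memlist, union_memlist]
  have h : (L0_6.map (E0 false 13)) ++ (L1_6.map (E0 true 13)) = L0_13 := by decide
  rw [h]


lemma chainL1_13 : S 1 13 = {w | w ∈ L1_13} := by
  rw [S1_eq, show (13+1:ℕ)/2 = 7 from rfl, chainL0_7, chainL1_7, image_memlist, image_memlist, union_memlist]
  have h : (L0_7.map (E1 false 13)) ++ (L1_7.map (E1 true 13)) = L1_13 := by decide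
  rw [h]


lemma chainL0_14 : S 0 14 = {w | w ∈ L0_14} := by
  rw [S0_eq, show (14:ℕ)/2 = 7 from rfl, chainL0_7, chainL1_7, image_memlist, image_memlist, union_memlist]
  have h : (L0_7.map (E0 false 14)) ++ (L1_7.map (E0 true 14)) = L0_14 := by decide
  rw [h]


lemma chainL1_14 : S 1 14 = {w | w ∈ L1_14} := by
  rw [S1_eq, show (14+1:ℕ)/2 = 7 from rfl, chainL0_7, chainL1_7, image_memlist, image_memlist, union_memlist]
  have h : (L0_7.map (E1 false 14)) ++ (L1_7.map (E1 true 14)) = L1_14 := by decide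
  rw [h]

lemma INJT_8 : (((L0_8 ++ L1_8)).map tortoise).Nodup := by decide
lemma INJT_9 : (((L0_9 ++ L1_9)).map tortoise).Nodup := by decide
lemma INJT_10 : (((L0_10 ++ L1_10)).map tortoise).Nodup := by decide
lemma INJT_11 : (((L0_11 ++ L1_11)).map tortoise).Nodup := by decide
lemma INJT_12 : (((L0_12 ++ L1_12)).map tortoise).Nodup := by decide
lemma INJT_13 : (((L0_13 ++ L1_13)).map tortoise).Nodup := by decide
lemma INJT_14 : (((L0_14 ++ L1_14)).map tortoise).Nodup := by decide
lemma DISJ7 : ∀ w ∈ L0_7, w ∉ L1_7 := by decide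



lemma pf_odd' (x : ℕ) : pf (2 * x + 1) = pf x := by
  rw [pfO _ (by omega)]; congr 1; omega

lemma pfE2 (i : ℕ) (h : i % 2 = 0) : pf i = decide ((i / 2) % 2 = 1) := by
  rw [pfE i h, decide_eq_decide]; omega

/-- The key parity contradiction: a stretch of `pf` matching an arithmetic
alternating pattern, except possibly at one index `s*`, cannot be too long. -/
lemma AUX2' (j k q s' : ℕ) (hq : j % 2 + 7 ≤ q)
    (hag : ∀ s, s < q → s ≠ s' → pf (j + s) = decide ((k + s) % 2 = 1)) : False := by
  -- find s with (j+s) even, s ≠ s', s+2 ≠ s', s+2 < q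
  obtain ⟨s, h1, h2, h3, h4⟩ : ∃ s, (j + s) % 2 = 0 ∧ s ≠ s' ∧ s + 2 ≠ s' ∧ s + 2 < q := by
    by_cases hA : s' = j % 2
    · exact ⟨j % 2 + 2, by omega, by omega, by omega, by omega⟩
    · by_cases hB : s' = j % 2 + 2
      · exact ⟨j % 2 + 4, by omega, by omega, by omega, by omega⟩
      · by_cases hC : s' = j % 2 + 4
        · exact ⟨j % 2, by omega, by omega, by omega, by omega⟩
        · exact ⟨j % 2, by omega, by omega, by omega, by omega⟩
  have e1 := hag s (by omega) h2
  have e2 := hag (s + 2) (by omega) h3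
  rw [pfE2 _ (by omega)] at e1
  rw [show j + (s + 2) = (j + s) + 2 by omega, pfE2 _ (by omega)] at e2
  rw [decide_eq_decide] at e1 e2
  have hh : ((j + s) + 2) / 2 = (j + s) / 2 + 1 := by omega
  rw [hh] at e2
  by_cases h : (k + s) % 2 = 1
  · have a1 := e1.mpr h
    have a2 := e2.mpr (by omega)
    omega
  · have a1 : ¬ (j + s) / 2 % 2 = 1 := fun hh2 => h (e1.mp hh2)
    have a2 : ¬ ((j + s) / 2 + 1) % 2 = 1 := fun hh2 => by
      have := e2.mp hh2; omega
    omega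

lemma AUX1' (j k q : ℕ) (hq : j % 2 + 3 ≤ q)
    (hag : ∀ s, s < q → pf (j + s) = decide ((k + s) % 2 = 1)) : False := by
  have e1 := hag (j % 2) (by omega)
  have e2 := hag (j % 2 + 2) (by omega)
  rw [pfE2 _ (by omega)] at e1
  rw [show j + (j % 2 + 2) = (j + j % 2) + 2 by omega, pfE2 _ (by omega)] at e2
  rw [decide_eq_decide] at e1 e2
  have hh : ((j + j % 2) + 2) / 2 = (j + j % 2) / 2 + 1 := by omega
  rw [hh] at e2
  by_cases h : (k + j % 2) % 2 = 1
  · have a1 := e1.mpr h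
    have a2 := e2.mpr (by omega)
    omega
  · have a1 : ¬ (j + j % 2) / 2 % 2 = 1 := fun hh2 => h (e1.mp hh2)
    have a2 : ¬ ((j + j % 2) / 2 + 1) % 2 = 1 := fun hh2 => by
      have := e2.mp hh2; omega
    omega

/-- Same-parity adjacent-swap rigidity. -/
lemma main_adj_same (q j1 j2 e : ℕ) (h4 : 4 ≤ q) (hpar : j1 % 2 = j2 % 2)
    (he : e + 1 < q)
    (hagree : ∀ s, s < q → s ≠ e → s ≠ e + 1 → pf (j1 + s) = pf (j2 + s))
    (hd1 : pf (j1 + e) ≠ pf (j2 + e))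
    (hd2 : pf (j1 + (e + 1)) ≠ pf (j2 + (e + 1))) : False := by
  by_cases h44 : j1 % 4 = j2 % 4
  · -- letters at even absolute positions are forced equal
    by_cases hpe : (j1 + e) % 2 = 0
    · apply hd1
      rw [pfE _ hpe, pfE _ (by omega), show (j1 + e) % 4 = (j2 + e) % 4 by omega]
    · apply hd2
      rw [pfE _ (by omega), pfE _ (by omega),
        show (j1 + (e + 1)) % 4 = (j2 + (e + 1)) % 4 by omega]
  · -- mod-4 phases differ: all even-abs letters differ, find one outside {e, e+1}
    obtain ⟨s, hs1, hs2, hs3, hs4⟩ :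
        ∃ s, (j1 + s) % 2 = 0 ∧ s ≠ e ∧ s ≠ e + 1 ∧ s < q := by
      by_cases hA : j1 % 2 = e ∨ j1 % 2 = e + 1
      · exact ⟨j1 % 2 + 2, by omega, by omega, by omega, by omega⟩
      · exact ⟨j1 % 2, by omega, by omega, by omega, by omega⟩
    have := hagree s hs4 hs2 hs3
    rw [pfE _ hs1, pfE _ (by omega), decide_eq_decide] at this
    by_cases h : (j1 + s) % 4 = 2
    · have := this.mp h; omega
    · have : ¬ (j2 + s) % 4 = 2 := fun hh => h (this.mpr hh); omega

lemma caseB (n i1 i2 d1 d2 : ℕ) (hn : 15 ≤ n) (h1 : i1 % 2 = 1) (h2 : i2 % 2 = 0)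
    (h12 : d1 < d2) (h2n : d2 < n) (hc : d2 ≤ d1 + 3)
    (hagree : ∀ t, t < n → t ≠ d1 → t ≠ d2 → pf (i1 + t) = pf (i2 + t)) : False := by
  rcases Nat.mod_two_eq_zero_or_one d1 with hod1 | hod1 <;>
    rcases Nat.mod_two_eq_zero_or_one d2 with hod2 | hod2
  · -- both even: use odd-offset class, pf side from i2 (even start)
    apply AUX1' (i2 / 2) ((i1 + 1) / 2) (n / 2) (by omega)
    intro s hs
    have e1 : 2 * (i2 / 2 + s) + 1 = i2 + (2 * s + 1) := by omega
    have e2 : i1 + (2 * s + 1) = 2 * ((i1 + 1) / 2 + s) := by omega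
    rw [← pf_odd' (i2 / 2 + s), e1]
    rw [show pf (i2 + (2 * s + 1)) = pf (i1 + (2 * s + 1)) from
      (hagree _ (by omega) (by omega) (by omega)).symm]
    rw [pfE2 _ (by omega), e2, decide_eq_decide]
    omega
  · -- d1 even, d2 odd: even-offset class contains only d1
    apply AUX2' (i1 / 2) (i2 / 2) ((n + 1) / 2) (d1 / 2) (by omega)
    intro s hs hs'
    have e1 : 2 * (i1 / 2 + s) + 1 = i1 + 2 * s := by omega
    have e2 : i2 + 2 * s = 2 * (i2 / 2 + s) := by omega
    rw [← pf_odd' (i1 / 2 + s), e1]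
    rw [show pf (i1 + 2 * s) = pf (i2 + 2 * s) from
      hagree _ (by omega) (by omega) (by omega)]
    rw [pfE2 _ (by omega), e2, decide_eq_decide]
    omega
  · -- d1 odd, d2 even: even-offset class contains only d2
    apply AUX2' (i1 / 2) (i2 / 2) ((n + 1) / 2) (d2 / 2) (by omega)
    intro s hs hs'
    have e1 : 2 * (i1 / 2 + s) + 1 = i1 + 2 * s := by omega
    have e2 : i2 + 2 * s = 2 * (i2 / 2 + s) := by omega
    rw [← pf_odd' (i1 / 2 + s), e1]
    rw [show pf (i1 + 2 * s) = pf (i2 + 2 * s) from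
      hagree _ (by omega) (by omega) (by omega)]
    rw [pfE2 _ (by omega), e2, decide_eq_decide]
    omega
  · -- both odd: even-offset class is clean
    apply AUX1' (i1 / 2) (i2 / 2) ((n + 1) / 2) (by omega)
    intro s hs
    have e1 : 2 * (i1 / 2 + s) + 1 = i1 + 2 * s := by omega
    have e2 : i2 + 2 * s = 2 * (i2 / 2 + s) := by omega
    rw [← pf_odd' (i1 / 2 + s), e1]
    rw [show pf (i1 + 2 * s) = pf (i2 + 2 * s) from
      hagree _ (by omega) (by omega) (by omega)]
    rw [pfE2 _ (by omega), e2, decide_eq_decide]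
    omega

lemma MAIN (n iw iv d1 d2 : ℕ) (hn : 15 ≤ n) (h12 : d1 < d2) (h2n : d2 < n)
    (hc : d2 ≤ d1 + 3)
    (hagree : ∀ t, t < n → t ≠ d1 → t ≠ d2 → pf (iw + t) = pf (iv + t))
    (hd1 : pf (iw + d1) ≠ pf (iv + d1)) (hd2 : pf (iw + d2) ≠ pf (iv + d2)) : False := by
  by_cases hpar : iw % 2 = iv % 2
  · by_cases h44 : iw % 4 = iv % 4
    · -- same residue mod 4: the two difference positions must be odd-absolute
      have o1 : (iw + d1) % 2 = 1 := by
        by_contra h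
        apply hd1
        rw [pfE _ (by omega), pfE _ (by omega), show (iw + d1) % 4 = (iv + d1) % 4 by omega]
      have o2 : (iw + d2) % 2 = 1 := by
        by_contra h
        apply hd2
        rw [pfE _ (by omega), pfE _ (by omega), show (iw + d2) % 4 = (iv + d2) % 4 by omega]
      have hd21 : d2 = d1 + 2 := by omega
      set ε := d1 % 2 with hε
      set jw := (iw + ε) / 2 with hjw
      set jv := (iv + ε) / 2 with hjv
      set q := (n + 1 - ε) / 2 with hq
      apply main_adj_same q jw jv (d1 / 2) (by omega) (by omega) (by omega)
      · intro s hs hs1 hs2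
        have e1 : 2 * (jw + s) + 1 = iw + (ε + 2 * s) := by omega
        have e2 : 2 * (jv + s) + 1 = iv + (ε + 2 * s) := by omega
        rw [← pf_odd' (jw + s), ← pf_odd' (jv + s), e1, e2]
        exact hagree _ (by omega) (by omega) (by omega)
      · have e1 : 2 * (jw + d1 / 2) + 1 = iw + d1 := by omega
        have e2 : 2 * (jv + d1 / 2) + 1 = iv + d1 := by omega
        rw [← pf_odd' (jw + d1 / 2), ← pf_odd' (jv + d1 / 2), e1, e2]
        exact hd1
      · have e1 : 2 * (jw + (d1 / 2 + 1)) + 1 = iw + d2 := by omega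
        have e2 : 2 * (jv + (d1 / 2 + 1)) + 1 = iv + d2 := by omega
        rw [← pf_odd' (jw + (d1 / 2 + 1)), ← pf_odd' (jv + (d1 / 2 + 1)), e1, e2]
        exact hd2
    · -- phases differ mod 4: find an even-absolute agreeing position
      obtain ⟨s, hs1, hs2, hs3, hs4⟩ :
          ∃ s, (iw + s) % 2 = 0 ∧ s ≠ d1 ∧ s ≠ d2 ∧ s < n := by
        by_cases hA : iw % 2 = d1 ∨ iw % 2 = d2
        · by_cases hB : iw % 2 + 2 = d1 ∨ iw % 2 + 2 = d2
          · exact ⟨iw % 2 + 4, by omega, by omega, by omega, by omega⟩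
          · exact ⟨iw % 2 + 2, by omega, by omega, by omega, by omega⟩
        · exact ⟨iw % 2, by omega, by omega, by omega, by omega⟩
      have := hagree s hs4 hs2 hs3
      rw [pfE _ hs1, pfE _ (by omega), decide_eq_decide] at this
      by_cases h : (iw + s) % 4 = 2
      · have := this.mp h; omega
      · have : ¬ (iv + s) % 4 = 2 := fun hh => h (this.mpr hh); omega
  · rcases Nat.mod_two_eq_zero_or_one iw with h | h
    · exact caseB n iv iw d1 d2 hn (by omega) h h12 h2n hc
        (fun t ht t1 t2 => (hagree t ht t1 t2).symm)
    · exact caseB n iw iv d1 d2 hn h (by omega) h12 h2n hc hagree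


lemma firstTrue : ∀ (l : List Bool), true ∈ l →
    ∃ k x, l = List.replicate k false ++ true :: x ∧
      l.erase true = List.replicate k false ++ x := by
  intro l
  induction l with
  | nil => simp
  | cons b l' ih =>
    intro hmem
    cases b with
    | true => exact ⟨0, l', by simp, by simp⟩
    | false =>
      have hm' : true ∈ l' := by simpa using hmem
      obtain ⟨k, x, h1, h2⟩ := ih hm'
      exact ⟨k + 1, x, by simp [List.replicate_succ, h1],
        by simp [List.replicate_succ, List.erase_cons, h2]⟩

lemma getD_rep_app (k : ℕ) (x : List Bool) (t : ℕ) :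
    (List.replicate k false ++ x).getD t false =
      if t < k then false else x.getD (t - k) false := by
  by_cases h : t < k
  · rw [if_pos h, List.getD_append _ _ _ _ (by simpa using h),
      List.getD_eq_getElem _ _ (by simpa using h)]
    simp
  · rw [if_neg h, List.getD_append_right _ _ _ _ (by simp; omega)]
    simp

/-- Pointwise description of the two words in an erase-collision. -/
lemma core_shape (c : ℕ) (hc : 1 ≤ c) (x : List Bool) :
    ∀ t, t ≠ 0 → t ≠ c →
      (true :: (List.replicate c false ++ x)).getD t false =
        (List.replicate c false ++ (true :: x)).getD t false := by
  intro t h0 hcn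
  obtain ⟨t', rfl⟩ : ∃ t', t = t' + 1 := ⟨t - 1, by omega⟩
  rw [List.getD_cons_succ, getD_rep_app, getD_rep_app]
  by_cases h1 : t' < c
  · rw [if_pos h1, if_pos (by omega)]
  · rw [if_neg h1, if_neg (by omega), show t' + 1 - c = (t' - c) + 1 by omega,
      List.getD_cons_succ]

lemma shapes : ∀ (w v : List Bool), w.length = v.length → true ∈ w → true ∈ v →
    w.erase true = v.erase true → w ≠ v →
    ∃ d1 d2, d1 < d2 ∧ d2 < w.length ∧
      (∀ t, t ≠ d1 → t ≠ d2 → w.getD t false = v.getD t false) ∧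
      w.getD d1 false ≠ v.getD d1 false ∧ w.getD d2 false ≠ v.getD d2 false ∧
      ((∀ t, t < d2 → v.getD t false = false) ∨ (∀ t, t < d2 → w.getD t false = false)) := by
  intro w
  induction w with
  | nil => simp
  | cons b w' ih =>
    intro v hlen hw htv herase hne
    cases v with
    | nil => simp at htv
    | cons b' v' =>
      by_cases hbb : b = b'
      · subst hbb
        cases b with
        | true =>
          exfalso
          apply hne
          rw [List.erase_cons_head, List.erase_cons_head] at herase
          rw [herase]
        | false =>
          have hw' : true ∈ w' := by simpa using hw
          have hv' : true ∈ v' := by simpa using htv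
          rw [List.erase_cons, List.erase_cons] at herase
          simp only [show ((false : Bool) == true) = false from rfl] at herase
          have herase' : w'.erase true = v'.erase true := by
            simpa using herase
          obtain ⟨d1, d2, hd12, hd2len, hagree, hD1, hD2, hzero⟩ :=
            ih v' (by simpa using hlen) hw' hv' herase' (by
              intro hh; exact hne (by rw [hh]))
          refine ⟨d1 + 1, d2 + 1, by omega, by simp; omega, ?_, ?_, ?_, ?_⟩
          · intro t h1 h2
            cases t with
            | zero => simp
            | succ t' =>
              rw [List.getD_cons_succ, List.getD_cons_succ]
              exact hagree t' (by omega) (by omega)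
          · rwa [List.getD_cons_succ, List.getD_cons_succ]
          · rwa [List.getD_cons_succ, List.getD_cons_succ]
          · rcases hzero with hz | hz
            · left
              intro t ht
              cases t with
              | zero => simp
              | succ t' => rw [List.getD_cons_succ]; exact hz t' (by omega)
            · right
              intro t ht
              cases t with
              | zero => simp
              | succ t' => rw [List.getD_cons_succ]; exact hz t' (by omega)
      · -- heads differ
        cases b with
        | true =>
          -- w = true :: w', v = false :: v'
          have hb' : b' = false := by
            cases b' <;> simp_all
          subst hb'
          have hv' : true ∈ v' := by simpa using htv
          obtain ⟨k, x, hvx, hverase⟩ := firstTrue v' hv'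
          rw [List.erase_cons_head, List.erase_cons,
            (show ((false : Bool) == true) = false from rfl)] at herase
          simp only [hverase, Bool.false_eq_true, if_false] at herase
          have hww : true :: w' =
              true :: (List.replicate (k + 1) false ++ x) := by
            rw [herase]; simp [List.replicate_succ]
          have hvv : false :: v' = List.replicate (k + 1) false ++ (true :: x) := by
            rw [hvx]; simp [List.replicate_succ]
          refine ⟨0, k + 1, by omega, ?_, ?_, ?_, ?_, ?_⟩
          · rw [hlen, hvv]
            simp
          · intro t h0 hk
            rw [hww, hvv]
            exact core_shape (k + 1) (by omega) x t h0 hk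
          · rw [hww, hvv, List.getD_cons_zero, getD_rep_app, if_pos (by omega)]
            simp
          · rw [hww, hvv, List.getD_cons_succ, getD_rep_app, getD_rep_app,
              if_pos (show k < k + 1 by omega), if_neg (show ¬ (k + 1 < k + 1) by omega),
              show k + 1 - (k + 1) = 0 by omega, List.getD_cons_zero]
            simp
          · left
            intro t ht
            rw [hvv, getD_rep_app, if_pos (by omega)]
        | false =>
          -- w = false :: w', v = true :: v'
          have hb' : b' = true := by
            cases b' <;> simp_all
          subst hb'
          have hw' : true ∈ w' := by simpa using hw
          obtain ⟨k, x, hwx, hwerase⟩ := firstTrue w' hw'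
          rw [List.erase_cons_head, List.erase_cons,
            (show ((false : Bool) == true) = false from rfl)] at herase
          simp only [hwerase, Bool.false_eq_true, if_false] at herase
          have hvv : true :: v' =
              true :: (List.replicate (k + 1) false ++ x) := by
            rw [← herase]; simp [List.replicate_succ]
          have hww : false :: w' = List.replicate (k + 1) false ++ (true :: x) := by
            rw [hwx]; simp [List.replicate_succ]
          refine ⟨0, k + 1, by omega, ?_, ?_, ?_, ?_, ?_⟩
          · rw [hww]
            simp
          · intro t h0 hk
            rw [hww, hvv]
            exact (core_shape (k + 1) (by omega) x t h0 hk).symm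
          · rw [hww, hvv, List.getD_cons_zero, getD_rep_app, if_pos (by omega)]
            simp
          · rw [hww, hvv, List.getD_cons_succ, getD_rep_app, getD_rep_app,
              if_pos (show k < k + 1 by omega), if_neg (show ¬ (k + 1 < k + 1) by omega),
              show k + 1 - (k + 1) = 0 by omega, List.getD_cons_zero]
            simp
          · right
            intro t ht
            rw [hww, getD_rep_app, if_pos (by omega)]

-- Section 9
lemma not4false (i : ℕ) :
    pf i = true ∨ pf (i + 1) = true ∨ pf (i + 2) = true ∨ pf (i + 3) = true := by
  rcases Nat.mod_two_eq_zero_or_one i with h | h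
  · rcases (show i % 4 = 0 ∨ i % 4 = 2 by omega) with h4 | h4
    · right; right; left
      rw [pfE _ (by omega)]
      simp only [decide_eq_true_eq]
      omega
    · left
      rw [pfE _ (by omega)]
      simp only [decide_eq_true_eq]
      omega
  · rcases (show (i + 1) % 4 = 0 ∨ (i + 1) % 4 = 2 by omega) with h4 | h4
    · right; right; right
      rw [pfE _ (by omega)]
      simp only [decide_eq_true_eq]
      omega
    · right; left
      rw [pfE _ (by omega)]
      simp only [decide_eq_true_eq]
      omega

lemma hastrue (i n : ℕ) (hn : 4 ≤ n) : true ∈ F i n := by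
  have get : ∀ t, t < n → pf (i + t) = true → true ∈ F i n := by
    intro t ht hpf
    have e : (F i n)[t]'(by rw [F_length]; exact ht) = true := by
      have := F_getD i n t ht
      rwa [List.getD_eq_getElem _ _ (by rw [F_length]; exact ht), hpf] at this
    exact e ▸ List.getElem_mem _
  rcases not4false i with h | h | h | h
  · exact get 0 (by omega) (by simpa using h)
  · exact get 1 (by omega) h
  · exact get 2 (by omega) h
  · exact get 3 (by omega) h

lemma factorSet_eq (n : ℕ) : factorSet pf n = S 0 n ∪ S 1 n := by
  ext w
  constructor
  · rintro ⟨hlen, i, hw⟩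
    rw [hlen] at hw
    rcases Nat.mod_two_eq_zero_or_one i with h | h
    · left; exact ⟨i, h, hw⟩
    · right; exact ⟨i, h, hw⟩
  · rintro (⟨i, _, rfl⟩ | ⟨i, _, rfl⟩) <;>
      exact ⟨F_length i n, i, by rw [F_length]; rfl⟩

lemma DISJ (n : ℕ) (hn : 7 ≤ n) : Disjoint (S 0 n) (S 1 n) := by
  rw [Set.disjoint_left]
  rintro w ⟨i, hi, rfl⟩ ⟨i', hi', hw'⟩
  have h7 : F i 7 = F i' 7 := by
    apply List.ext_getElem (by rw [F_length, F_length])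
    intro t h1 h2
    rw [F_length] at h1
    rw [← List.getD_eq_getElem _ false, ← List.getD_eq_getElem _ false,
      F_getD _ _ _ h1, F_getD _ _ _ h1]
    have h5 := congrArg (fun l => l.getD t false) hw'
    rwa [F_getD _ _ _ (show t < n by omega), F_getD _ _ _ (show t < n by omega)] at h5
  have m0 : F i 7 ∈ S 0 7 := ⟨i, hi, rfl⟩
  have m1 : F i' 7 ∈ S 1 7 := ⟨i', hi', rfl⟩
  rw [chainL0_7] at m0
  rw [chainL1_7] at m1
  exact DISJ7 _ m0 (h7 ▸ m1)

lemma injTort (n : ℕ) (hn : 8 ≤ n) : Set.InjOn tortoise (factorSet pf n) := by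
  intro w hw v hv heq
  by_contra hne
  by_cases h14 : n ≤ 14
  · -- finite check
    rw [factorSet_eq] at hw hv
    interval_cases n
    · rw [chainL0_8, chainL1_8, union_memlist] at hw hv
      exact hne (List.inj_on_of_nodup_map INJT_8 hw hv heq)
    · rw [chainL0_9, chainL1_9, union_memlist] at hw hv
      exact hne (List.inj_on_of_nodup_map INJT_9 hw hv heq)
    · rw [chainL0_10, chainL1_10, union_memlist] at hw hv
      exact hne (List.inj_on_of_nodup_map INJT_10 hw hv heq)
    · rw [chainL0_11, chainL1_11, union_memlist] at hw hv
      exact hne (List.inj_on_of_nodup_map INJT_11 hw hv heq)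
    · rw [chainL0_12, chainL1_12, union_memlist] at hw hv
      exact hne (List.inj_on_of_nodup_map INJT_12 hw hv heq)
    · rw [chainL0_13, chainL1_13, union_memlist] at hw hv
      exact hne (List.inj_on_of_nodup_map INJT_13 hw hv heq)
    · rw [chainL0_14, chainL1_14, union_memlist] at hw hv
      exact hne (List.inj_on_of_nodup_map INJT_14 hw hv heq)
  · -- structural case
    obtain ⟨hlw, iw, hwF⟩ := hw
    obtain ⟨hlv, iv, hvF⟩ := hv
    rw [hlw] at hwF
    rw [hlv] at hvF
    have hwF : w = F iw n := hwF
    have hvF : v = F iv n := hvF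
    have htw : true ∈ w := hwF ▸ hastrue iw n (by omega)
    have htv : true ∈ v := hvF ▸ hastrue iv n (by omega)
    rw [tortoise, if_pos htw, tortoise, if_pos htv] at heq
    have her : w.erase true = v.erase true := List.append_left_injective _ heq
    obtain ⟨d1, d2, h12, h2len, hagree, hD1, hD2, hzero⟩ :=
      shapes w v (hlw.trans hlv.symm) htw htv her hne
    rw [hlw] at h2len
    have hag' : ∀ t, t < n → t ≠ d1 → t ≠ d2 → pf (iw + t) = pf (iv + t) := by
      intro t ht h1 h2
      have := hagree t h1 h2
      rwa [hwF, hvF, F_getD _ _ _ ht, F_getD _ _ _ ht] at this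
    have hd1' : pf (iw + d1) ≠ pf (iv + d1) := by
      rw [hwF, hvF] at hD1
      rwa [F_getD _ _ _ (by omega), F_getD _ _ _ (by omega)] at hD1
    have hd2' : pf (iw + d2) ≠ pf (iv + d2) := by
      rw [hwF, hvF] at hD2
      rwa [F_getD _ _ _ (by omega), F_getD _ _ _ (by omega)] at hD2
    have hd23 : d2 ≤ 3 := by
      by_contra hgt
      rcases hzero with hz | hz
      · have hf : ∀ t, t < 4 → pf (iv + t) = false := by
          intro t ht
          have := hz t (by omega)
          rwa [hvF, F_getD _ _ _ (by omega)] at this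
        rcases not4false iv with h | h | h | h
        · have := hf 0 (by omega); simp_all
        · have := hf 1 (by omega); simp_all
        · have := hf 2 (by omega); simp_all
        · have := hf 3 (by omega); simp_all
      · have hf : ∀ t, t < 4 → pf (iw + t) = false := by
          intro t ht
          have := hz t (by omega)
          rwa [hwF, F_getD _ _ _ (by omega)] at this
        rcases not4false iw with h | h | h | h
        · have := hf 0 (by omega); simp_all
        · have := hf 1 (by omega); simp_all
        · have := hf 2 (by omega); simp_all
        · have := hf 3 (by omega); simp_all
    exact MAIN n iw iv d1 d2 (by omega) h12 h2len (by omega) hag' hd1' hd2'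

/-- for all `n ≥ 8`, the tortoise complexity of the paperfolding word
satisfies `ρ^t_f(n) = 4n`. -/
theorem stmt_5 (n : ℕ) (hn : 8 ≤ n) : rhoTort pf n = 4 * n := by
  rw [rhoTort, Set.ncard_image_of_injOn (injTort n hn), factorSet_eq,
    Set.ncard_union_eq (DISJ n (by omega)) (S_finite 0 n) (S_finite 1 n)]
  exact g_eq n (by omega)
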